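/- If f : [0,∞) → ℝ satisfies the Lipschitz condition |f(x)−f(y)| ≤ M|x−y|^α for some M > 0 and 0 < α ≤ 1, then |D_n*(f; x) − f(x)| ≤ M (Ω_n²(x))^{α/2} for every x ≥ 0 and n ≥ 1. -/

import Mathlib

open scoped BigOperators
open MeasureTheory Filter Real Set
/-- Parity indicator: 0 for even, 1 for odd. -/
def theta (j : ℕ) : ℝ := if j % 2 = 1 then 1 else 0

/-- Dunkl coefficients via the recursion. -/
noncomputable def gamRec (μ : ℝ) : ℕ → ℝ
  | 0 => 1
  | k + 1 => ((k : ℝ) + 1 + 2 * μ * theta (k + 1)) * gamRec μ k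

/-- Dunkl exponential. -/
noncomputable def emu (μ : ℝ) (x : ℝ) : ℝ := ∑' k : ℕ, x ^ k / gamRec μ k

/-- Dunkl-Appell polynomials. -/
noncomputable def pk (μ : ℝ) (a : ℕ → ℝ) (k : ℕ) (x : ℝ) : ℝ :=
  ∑ j ∈ Finset.range (k + 1),
    (gamRec μ k / (gamRec μ j * gamRec μ (k - j))) * a (k - j) * x ^ j

/-- The analytic function A. -/
noncomputable def Afun (μ : ℝ) (a : ℕ → ℝ) (t : ℝ) : ℝ := ∑' r : ℕ, a r * t ^ r / gamRec μ r

/-- Dunkl-Appell Gamma-type (Szász–Durrmeyer) operator. -/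
noncomputable def Dop (μ lam : ℝ) (a : ℕ → ℝ) (n : ℕ) (f : ℝ → ℝ) (x : ℝ) : ℝ :=
  (1 / (emu μ (n * x) * Afun μ a 1)) *
    ∑' k : ℕ, (pk μ a k (n * x) / gamRec μ k) *
      ((n : ℝ) ^ ((k : ℝ) + 2 * μ * theta k + lam + 1) /
        Real.Gamma ((k : ℝ) + 2 * μ * theta k + lam + 1)) *
      ∫ t in Set.Ioi (0 : ℝ), Real.exp (-(n : ℝ) * t) * t ^ ((k : ℝ) + 2 * μ * theta k + lam) * f t

/-- Analyticity (radius of convergence > 1) hypothesis for A. -/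
def AnalyticHyp (μ : ℝ) (a : ℕ → ℝ) : Prop :=
  ∃ R > (1 : ℝ), ∀ t : ℝ, |t| < R → Summable (fun r : ℕ => a r * t ^ r / gamRec μ r)

/-- Modulus of continuity on [0,∞). -/
noncomputable def modCont (f : ℝ → ℝ) (δ : ℝ) : ℝ :=
  sSup {d : ℝ | ∃ x y : ℝ, 0 ≤ x ∧ 0 ≤ y ∧ |x - y| ≤ δ ∧ d = |f x - f y|}

/-- sup norm on [0,∞). -/
noncomputable def CBnorm (g : ℝ → ℝ) : ℝ := sSup ((fun x => |g x|) '' Set.Ici 0)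

/-- Dunkl coefficients via the Gamma-function formulas of the paper. -/
noncomputable def gamG (μ : ℝ) (m : ℕ) : ℝ :=
  if m % 2 = 0 then
    2 ^ m * (Nat.factorial (m / 2)) * Real.Gamma ((m / 2 : ℕ) + μ + 1 / 2) / Real.Gamma (μ + 1 / 2)
  else
    2 ^ m * (Nat.factorial ((m - 1) / 2)) * Real.Gamma (((m - 1) / 2 : ℕ) + μ + 3 / 2) / Real.Gamma (μ + 1 / 2)



lemma theta_nonneg (j : ℕ) : 0 ≤ theta j := by unfold theta; split <;> norm_num

lemma theta_le_one (j : ℕ) : theta j ≤ 1 := by unfold theta; split <;> norm_num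

lemma gamRec_pos {μ : ℝ} (hμ : 0 ≤ μ) : ∀ k, 0 < gamRec μ k
  | 0 => one_pos
  | k + 1 => by
    have h1 : (0:ℝ) < (k : ℝ) + 1 + 2 * μ * theta (k+1) := by
      have := theta_nonneg (k+1); positivity
    exact mul_pos h1 (gamRec_pos hμ k)

lemma factorial_le_gamRec {μ : ℝ} (hμ : 0 ≤ μ) : ∀ k, (k.factorial : ℝ) ≤ gamRec μ k
  | 0 => by simp [gamRec]
  | k + 1 => by
    have ih := factorial_le_gamRec hμ k
    have h1 : ((k:ℝ) + 1) ≤ (k : ℝ) + 1 + 2 * μ * theta (k+1) := by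
      have := theta_nonneg (k+1); nlinarith
    have hf : (0:ℝ) ≤ (k.factorial : ℝ) := by positivity
    calc ((k+1).factorial : ℝ) = ((k:ℝ)+1) * k.factorial := by
          push_cast [Nat.factorial_succ]; ring
      _ ≤ ((k:ℝ) + 1 + 2 * μ * theta (k+1)) * gamRec μ k := by
          apply mul_le_mul h1 ih hf (by linarith)
      _ = gamRec μ (k+1) := rfl

lemma summable_pow_div_gamRec {μ : ℝ} (hμ : 0 ≤ μ) {y : ℝ} (hy : 0 ≤ y) :
    Summable (fun k : ℕ => y ^ k / gamRec μ k) := by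
  refine Summable.of_nonneg_of_le (fun k => ?_) (fun k => ?_)
    (Real.summable_pow_div_factorial y)
  · have := gamRec_pos hμ k; positivity
  · exact div_le_div_of_nonneg_left (by positivity) (by exact_mod_cast k.factorial_pos)
      (factorial_le_gamRec hμ k)


lemma integrableOn_exp_mul_rpow {c : ℝ} (hc : 0 < c) {σ : ℝ} (hσ : -1 < σ) :
    IntegrableOn (fun t : ℝ => Real.exp (-c * t) * t ^ σ) (Set.Ioi 0) := by
  have h := integrableOn_rpow_mul_exp_neg_mul_rpow hσ zero_lt_one hc
  refine h.congr_fun (fun t ht => ?_) measurableSet_Ioi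
  beta_reduce; rw [Real.rpow_one]; ring

lemma integral_exp_mul_rpow {c : ℝ} (hc : 0 < c) {σ : ℝ} (hσ : -1 < σ) :
    ∫ t in Set.Ioi (0:ℝ), Real.exp (-c * t) * t ^ σ =
      Real.Gamma (σ + 1) / c ^ (σ + 1) := by
  have h := Real.integral_rpow_mul_exp_neg_mul_Ioi (a := σ+1) (r := c) (by linarith) hc
  rw [add_sub_cancel_right] at h
  have : ∫ t in Set.Ioi (0:ℝ), Real.exp (-c * t) * t ^ σ
      = ∫ t in Set.Ioi (0:ℝ), t ^ σ * Real.exp (-(c * t)) := by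
    refine setIntegral_congr_fun measurableSet_Ioi (fun t _ => ?_)
    rw [neg_mul]; ring
  rw [this, h, one_div, Real.inv_rpow hc.le, mul_comm, div_eq_mul_inv]

lemma integrable_kernel_sq {c : ℝ} (hc : 0 < c) {σ : ℝ} (hσ : 0 ≤ σ) :
    IntegrableOn (fun t : ℝ => Real.exp (-c * t) * t ^ σ * (1 + t) ^ 2) (Set.Ioi 0) := by
  have h0 := integrableOn_exp_mul_rpow hc (by linarith : (-1:ℝ) < σ)
  have h1 := integrableOn_exp_mul_rpow hc (by linarith : (-1:ℝ) < σ + 1)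
  have h2 := integrableOn_exp_mul_rpow hc (by linarith : (-1:ℝ) < σ + 2)
  have hI : IntegrableOn (fun t : ℝ => Real.exp (-c * t) * t ^ σ
      + (2 * (Real.exp (-c * t) * t ^ (σ+1)) + Real.exp (-c * t) * t ^ (σ+2)))
      (Set.Ioi 0) := h0.add ((h1.const_mul 2).add h2)
  refine hI.congr_fun (fun t ht => ?_) measurableSet_Ioi
  have ht0 : (0:ℝ) < t := ht
  have e1 : t ^ (σ + 1) = t ^ σ * t := by
    rw [Real.rpow_add ht0, Real.rpow_one]
  have e2 : t ^ (σ + 2) = t ^ σ * t ^ (2:ℕ) := by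
    rw [Real.rpow_add ht0]; norm_num [Real.rpow_natCast]
  beta_reduce; rw [e1, e2]; ring

lemma aesm_kernel {c σ : ℝ} (hσ : 0 ≤ σ) {ψ : ℝ → ℝ}
    (hm : AEStronglyMeasurable ψ (volume.restrict (Set.Ioi 0))) :
    AEStronglyMeasurable (fun t : ℝ => Real.exp (-c * t) * t ^ σ * ψ t)
      (volume.restrict (Set.Ioi 0)) := by
  refine AEStronglyMeasurable.mul (AEStronglyMeasurable.mul ?_ ?_) hm
  · exact (Real.continuous_exp.comp (continuous_const.mul continuous_id)).aestronglyMeasurable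
  · exact (Real.continuous_rpow_const hσ).aestronglyMeasurable

lemma integrableOn_kernel_mul {c : ℝ} (hc : 0 < c) {σ : ℝ} (hσ : 0 ≤ σ) {ψ : ℝ → ℝ} {C : ℝ}
    (hm : AEStronglyMeasurable ψ (volume.restrict (Set.Ioi 0)))
    (hb : ∀ t ∈ Set.Ioi (0:ℝ), |ψ t| ≤ C * (1 + t) ^ 2) :
    IntegrableOn (fun t : ℝ => Real.exp (-c * t) * t ^ σ * ψ t) (Set.Ioi 0) := by
  refine Integrable.mono ((integrable_kernel_sq hc hσ).const_mul C) (aesm_kernel hσ hm) ?_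
  rw [ae_restrict_iff' measurableSet_Ioi]
  filter_upwards with t ht
  have ht0 : (0:ℝ) < t := ht
  have hker : (0:ℝ) ≤ Real.exp (-c * t) * t ^ σ := by positivity
  rw [Real.norm_eq_abs, Real.norm_eq_abs, abs_mul, abs_of_nonneg hker]
  calc Real.exp (-c*t) * t ^ σ * |ψ t| ≤ Real.exp (-c*t) * t ^ σ * (C * (1+t)^2) :=
        mul_le_mul_of_nonneg_left (hb t ht) hker
    _ ≤ |C * (Real.exp (-c*t) * t ^ σ * (1+t)^2)| := by
        rw [show Real.exp (-c*t) * t ^ σ * (C * (1+t)^2)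
            = C * (Real.exp (-c*t) * t ^ σ * (1+t)^2) by ring]
        exact le_abs_self _

lemma kernel_norm_one {c : ℝ} (hc : 0 < c) {σ : ℝ} (hσ : 0 ≤ σ) :
    (c ^ (σ + 1) / Real.Gamma (σ + 1)) *
      ∫ t in Set.Ioi (0:ℝ), Real.exp (-c * t) * t ^ σ = 1 := by
  rw [integral_exp_mul_rpow hc (by linarith)]
  have h1 : Real.Gamma (σ + 1) ≠ 0 := (Real.Gamma_pos_of_pos (by linarith)).ne'
  have h2 : c ^ (σ + 1) ≠ 0 := (Real.rpow_pos_of_pos hc _).ne'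
  field_simp

lemma kernel_moment_bound {c : ℝ} (hc : 1 ≤ c) {σ : ℝ} (hσ : 0 ≤ σ) :
    (c ^ (σ + 1) / Real.Gamma (σ + 1)) *
      ∫ t in Set.Ioi (0:ℝ), Real.exp (-c * t) * t ^ σ * (1 + t) ^ 2 ≤ (σ + 3) ^ 2 := by
  have hc0 : (0:ℝ) < c := by linarith
  have h0 := integrableOn_exp_mul_rpow hc0 (by linarith : (-1:ℝ) < σ)
  have h1 := integrableOn_exp_mul_rpow hc0 (by linarith : (-1:ℝ) < σ + 1)
  have h2 := integrableOn_exp_mul_rpow hc0 (by linarith : (-1:ℝ) < σ + 2)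
  have hsplit : ∫ t in Set.Ioi (0:ℝ), Real.exp (-c * t) * t ^ σ * (1 + t) ^ 2
      = (∫ t in Set.Ioi (0:ℝ), Real.exp (-c * t) * t ^ σ)
        + ((∫ t in Set.Ioi (0:ℝ), 2 * (Real.exp (-c * t) * t ^ (σ+1)))
        + ∫ t in Set.Ioi (0:ℝ), Real.exp (-c * t) * t ^ (σ+2)) := by
    have e : ∫ t in Set.Ioi (0:ℝ), Real.exp (-c * t) * t ^ σ * (1 + t) ^ 2
        = ∫ t in Set.Ioi (0:ℝ), (Real.exp (-c * t) * t ^ σ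
          + (2 * (Real.exp (-c * t) * t ^ (σ+1)) + Real.exp (-c * t) * t ^ (σ+2))) := by
      refine setIntegral_congr_fun measurableSet_Ioi (fun t ht => ?_)
      have ht0 : (0:ℝ) < t := ht
      have e1 : t ^ (σ + 1) = t ^ σ * t := by rw [Real.rpow_add ht0, Real.rpow_one]
      have e2 : t ^ (σ + 2) = t ^ σ * t ^ (2:ℕ) := by
        rw [Real.rpow_add ht0]; norm_num [Real.rpow_natCast]
      rw [e1, e2]; ring
    have hb : IntegrableOn (fun t : ℝ => 2 * (Real.exp (-c * t) * t ^ (σ+1))) (Set.Ioi 0) :=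
      h1.const_mul 2
    have hadd : IntegrableOn (fun t : ℝ => 2 * (Real.exp (-c * t) * t ^ (σ+1))
        + Real.exp (-c * t) * t ^ (σ+2)) (Set.Ioi 0) := hb.add h2
    rw [e, integral_add h0 hadd, integral_add hb h2]
  rw [hsplit, MeasureTheory.integral_const_mul, integral_exp_mul_rpow hc0 (by linarith),
    integral_exp_mul_rpow hc0 (by linarith), integral_exp_mul_rpow hc0 (by linarith)]
  have hG : 0 < Real.Gamma (σ + 1) := Real.Gamma_pos_of_pos (by linarith)
  have hg1 : Real.Gamma (σ + 1 + 1) = (σ + 1) * Real.Gamma (σ + 1) :=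
    Real.Gamma_add_one (by positivity)
  have hg2 : Real.Gamma (σ + 2 + 1) = (σ + 2) * ((σ + 1) * Real.Gamma (σ + 1)) := by
    rw [show σ + 2 + 1 = (σ + 2) + 1 by ring, Real.Gamma_add_one (by positivity),
      show σ + 2 = (σ + 1) + 1 by ring, Real.Gamma_add_one (by positivity)]
  have hr1 : c ^ (σ + 1 + 1) = c ^ (σ + 1) * c := by
    rw [Real.rpow_add hc0, Real.rpow_one]
  have hr2 : c ^ (σ + 2 + 1) = c ^ (σ + 1) * c ^ (2:ℕ) := by
    rw [show σ + 2 + 1 = (σ + 1) + 2 by ring, Real.rpow_add hc0]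
    norm_num [Real.rpow_natCast]
  rw [hg1, hg2, hr1, hr2]
  have hcp : (0:ℝ) < c ^ (σ + 1) := Real.rpow_pos_of_pos hc0 _
  have key : (c ^ (σ+1) / Real.Gamma (σ+1)) *
      (Real.Gamma (σ+1) / c ^ (σ+1)
        + (2 * ((σ+1) * Real.Gamma (σ+1) / (c ^ (σ+1) * c))
        + (σ+2) * ((σ+1) * Real.Gamma (σ+1)) / (c ^ (σ+1) * c ^ (2:ℕ))))
      = 1 + 2 * (σ+1) / c + (σ+2) * (σ+1) / c ^ (2:ℕ) := by
    field_simp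
    ring
  rw [key]
  have hb1 : 2 * (σ+1) / c ≤ 2 * (σ+1) := by
    apply div_le_self (by linarith) hc
  have hcsq : (1:ℝ) ≤ c ^ (2:ℕ) := by nlinarith
  have hb2 : (σ+2) * (σ+1) / c ^ (2:ℕ) ≤ (σ+2) * (σ+1) := by
    apply div_le_self (by nlinarith) hcsq
  nlinarith

lemma holder_continuousOn {f : ℝ → ℝ} {M α : ℝ} (hα0 : 0 < α)
    (hf : ∀ x y : ℝ, 0 ≤ x → 0 ≤ y → |f x - f y| ≤ M * |x - y| ^ α) :
    ContinuousOn f (Set.Ici 0) := by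
  intro t ht
  have h1 : Tendsto (fun y : ℝ => M * |y - t| ^ α) (nhdsWithin t (Set.Ici 0)) (nhds 0) := by
    have h2 : Tendsto (fun y : ℝ => |y - t|) (nhdsWithin t (Set.Ici 0)) (nhds 0) := by
      have : Tendsto (fun y : ℝ => |y - t|) (nhds t) (nhds |t - t|) :=
        ((continuous_id.sub continuous_const).abs).tendsto t
      simpa using this.mono_left nhdsWithin_le_nhds
    have h3 : ContinuousAt (fun r : ℝ => M * r ^ α) 0 :=
      (continuousAt_const.mul (Real.continuousAt_rpow_const 0 α (Or.inr hα0.le)))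
    have := h3.tendsto.comp h2
    simpa [Function.comp_def, Real.zero_rpow hα0.ne'] using this
  rw [ContinuousWithinAt, Metric.tendsto_nhds]
  intro ε hε
  rw [Metric.tendsto_nhds] at h1
  filter_upwards [h1 ε hε, self_mem_nhdsWithin] with y hy hy0
  rw [Real.dist_eq]
  calc |f y - f t| ≤ M * |y - t| ^ α := hf y t hy0 ht
    _ ≤ |M * |y - t| ^ α - 0| := by rw [sub_zero]; exact le_abs_self _
    _ < ε := by rw [Real.dist_eq] at hy; simpa using hy

lemma rpow_le_one_add {r α : ℝ} (hr : 0 ≤ r) (hα0 : 0 < α) (hα1 : α ≤ 1) :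
    r ^ α ≤ 1 + r := by
  rcases le_or_gt r 1 with h | h
  · have := Real.rpow_le_one hr h hα0.le
    linarith
  · have h2 : r ^ α ≤ r ^ (1:ℝ) :=
      Real.rpow_le_rpow_of_exponent_le h.le hα1
    rw [Real.rpow_one] at h2
    linarith

lemma Jabs {c σ C : ℝ} (hc : 0 < c) (hσ : 0 ≤ σ) {ψ : ℝ → ℝ}
    (hm : AEStronglyMeasurable ψ (volume.restrict (Set.Ioi 0)))
    (hb : ∀ t ∈ Set.Ioi (0:ℝ), |ψ t| ≤ C * (1 + t) ^ 2) :
    |∫ t in Set.Ioi (0:ℝ), Real.exp (-c * t) * t ^ σ * ψ t|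
      ≤ C * ∫ t in Set.Ioi (0:ℝ), Real.exp (-c * t) * t ^ σ * (1 + t) ^ 2 := by
  have h1 : |∫ t in Set.Ioi (0:ℝ), Real.exp (-c * t) * t ^ σ * ψ t|
      ≤ ∫ t in Set.Ioi (0:ℝ), |Real.exp (-c * t) * t ^ σ * ψ t| := by
    have := norm_integral_le_integral_norm (μ := volume.restrict (Set.Ioi 0))
        (f := fun t : ℝ => Real.exp (-c * t) * t ^ σ * ψ t)
    simpa only [Real.norm_eq_abs] using this
  refine h1.trans ?_
  have h2 : ∫ t in Set.Ioi (0:ℝ), |Real.exp (-c * t) * t ^ σ * ψ t|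
      ≤ ∫ t in Set.Ioi (0:ℝ), C * (Real.exp (-c * t) * t ^ σ * (1 + t) ^ 2) := by
    refine setIntegral_mono_on ((integrableOn_kernel_mul hc hσ hm hb).abs)
      ((integrable_kernel_sq hc hσ).const_mul C) measurableSet_Ioi (fun t ht => ?_)
    have ht0 : (0:ℝ) < t := ht
    have hker : (0:ℝ) ≤ Real.exp (-c * t) * t ^ σ := by positivity
    rw [abs_mul, abs_of_nonneg hker]
    calc Real.exp (-c*t) * t ^ σ * |ψ t| ≤ Real.exp (-c*t) * t ^ σ * (C * (1+t)^2) :=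
          mul_le_mul_of_nonneg_left (hb t ht) hker
      _ = C * (Real.exp (-c*t) * t ^ σ * (1+t)^2) := by ring
  refine h2.trans_eq ?_
  rw [MeasureTheory.integral_const_mul]

noncomputable def Jop (c : ℝ) (σ : ℕ → ℝ) (φ : ℝ → ℝ) (k : ℕ) : ℝ :=
  (c ^ (σ k + 1) / Real.Gamma (σ k + 1)) *
    ∫ t in Set.Ioi (0:ℝ), Real.exp (-c * t) * t ^ (σ k) * φ t

section core
variable {c : ℝ} {σ : ℕ → ℝ}

lemma Jop_nonneg (hc : 0 < c) (hσ : ∀ k, 0 ≤ σ k) {φ : ℝ → ℝ}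
    (hφ : ∀ t ∈ Set.Ioi (0:ℝ), 0 ≤ φ t) (k : ℕ) : 0 ≤ Jop c σ φ k := by
  have h1 : 0 ≤ c ^ (σ k + 1) / Real.Gamma (σ k + 1) := by
    have := Real.Gamma_pos_of_pos (show (0:ℝ) < σ k + 1 by have := hσ k; linarith)
    positivity
  refine mul_nonneg h1 (setIntegral_nonneg measurableSet_Ioi (fun t ht => ?_))
  have ht0 : (0:ℝ) < t := ht
  have := hφ t ht
  positivity
end core

section hold
variable {c : ℝ} {σ : ℕ → ℝ}

lemma holder_core (hc : 0 < c) (hσ : ∀ k, 0 ≤ σ k) (W : ℕ → ℝ) (hW0 : ∀ k, 0 ≤ W k)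
    (hWs : Summable W) (hW1 : ∑' k, W k = 1)
    (hJ1 : ∀ k, Jop c σ (fun _ => (1:ℝ)) k = 1)
    (x α : ℝ) (hα0 : 0 < α) (hα1 : α ≤ 1)
    (hint1 : ∀ k, IntegrableOn
      (fun t : ℝ => Real.exp (-c*t) * t ^ (σ k) * (fun _ => (1:ℝ)) t) (Set.Ioi 0))
    (hintα : ∀ k, IntegrableOn
      (fun t : ℝ => Real.exp (-c*t) * t ^ (σ k) * (fun s => |s - x| ^ α) t) (Set.Ioi 0))
    (hint2 : ∀ k, IntegrableOn
      (fun t : ℝ => Real.exp (-c*t) * t ^ (σ k) * (fun s => (s - x) ^ 2) t) (Set.Ioi 0))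
    (hSα : Summable (fun k => W k * Jop c σ (fun s => |s - x| ^ α) k))
    (hS2 : Summable (fun k => W k * Jop c σ (fun s => (s - x) ^ 2) k)) :
    ∑' k, W k * Jop c σ (fun s => |s - x| ^ α) k
      ≤ (∑' k, W k * Jop c σ (fun s => (s - x) ^ 2) k) ^ (α / 2) := by
  classical
  set ck : ℕ → ℝ := fun k => c ^ (σ k + 1) / Real.Gamma (σ k + 1) with hck_def
  have hck0 : ∀ k, 0 ≤ ck k := by
    intro k
    have := Real.Gamma_pos_of_pos (show (0:ℝ) < σ k + 1 by have := hσ k; linarith)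
    positivity
  set ρ : ℕ → ℝ → ENNReal := fun k t =>
    ENNReal.ofReal ((W k * ck k) * (Real.exp (-c*t) * t ^ (σ k))) with hρ_def
  have hρmeas : ∀ k, Measurable (ρ k) := by
    intro k
    apply ENNReal.measurable_ofReal.comp
    apply Measurable.const_mul
    exact ((Real.continuous_exp.comp (continuous_const.mul continuous_id)).mul
      (Real.continuous_rpow_const (hσ k))).measurable
  set ν : Measure ℝ :=
    Measure.sum (fun k => (volume.restrict (Set.Ioi 0)).withDensity (ρ k)) with hν_def
  -- the bridge
  have bridge : ∀ (φ : ℝ → ℝ), (∀ t ∈ Set.Ioi (0:ℝ), 0 ≤ φ t) →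
      (∀ k, IntegrableOn (fun t : ℝ => Real.exp (-c*t) * t ^ (σ k) * φ t) (Set.Ioi 0)) →
      Summable (fun k => W k * Jop c σ φ k) →
      ∫⁻ t, ENNReal.ofReal (φ t) ∂ν = ENNReal.ofReal (∑' k, W k * Jop c σ φ k) := by
    intro φ hφnn hφint hφsum
    rw [hν_def, lintegral_sum_measure]
    have hterm : ∀ k, ∫⁻ t, ENNReal.ofReal (φ t)
        ∂((volume.restrict (Set.Ioi 0)).withDensity (ρ k))
        = ENNReal.ofReal (W k * Jop c σ φ k) := by
      intro k
      rw [lintegral_withDensity_eq_lintegral_mul_non_measurable _ (hρmeas k)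
        (Eventually.of_forall (fun t => ENNReal.ofReal_lt_top))]
      have e1 : ∫⁻ t in Set.Ioi (0:ℝ), (ρ k * fun s => ENNReal.ofReal (φ s)) t
          = ∫⁻ t in Set.Ioi (0:ℝ),
            ENNReal.ofReal ((W k * ck k) * (Real.exp (-c*t) * t ^ (σ k) * φ t)) := by
        refine setLIntegral_congr_fun measurableSet_Ioi (fun t ht => ?_)
        have ht0 : (0:ℝ) < t := ht
        have hnn : 0 ≤ (W k * ck k) * (Real.exp (-c*t) * t ^ (σ k)) := by
          have := hW0 k; have := hck0 k; positivity
        simp only [Pi.mul_apply, hρ_def]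
        rw [← ENNReal.ofReal_mul hnn, mul_assoc]
      rw [e1]
      have hInt : Integrable
          (fun t : ℝ => (W k * ck k) * (Real.exp (-c*t) * t ^ (σ k) * φ t))
          (volume.restrict (Set.Ioi 0)) := (hφint k).const_mul _
      have hnnae : 0 ≤ᵐ[volume.restrict (Set.Ioi 0)]
          (fun t : ℝ => (W k * ck k) * (Real.exp (-c*t) * t ^ (σ k) * φ t)) := by
        rw [EventuallyLE, ae_restrict_iff' measurableSet_Ioi]
        filter_upwards with t ht
        have ht0 : (0:ℝ) < t := ht
        have h1 := hφnn t ht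
        have := hW0 k; have := hck0 k
        simp only [Pi.zero_apply]
        positivity
      rw [← ofReal_integral_eq_lintegral_ofReal hInt hnnae]
      congr 1
      rw [MeasureTheory.integral_const_mul, Jop]
      ring
    rw [tsum_congr hterm, ← ENNReal.ofReal_tsum_of_nonneg (fun k => ?_) hφsum]
    · exact mul_nonneg (hW0 k) (Jop_nonneg hc hσ hφnn k)
  -- summable of W * J1
  have hS1 : Summable (fun k => W k * Jop c σ (fun _ => (1:ℝ)) k) := by
    refine hWs.congr (fun k => ?_)
    rw [hJ1 k, mul_one]
  have hT1 : ∑' k, W k * Jop c σ (fun _ => (1:ℝ)) k = 1 := by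
    rw [tsum_congr (fun k => by rw [hJ1 k, mul_one]), hW1]
  haveI hν1 : IsProbabilityMeasure ν := by
    constructor
    have h1 : ν Set.univ = ∫⁻ t, ENNReal.ofReal ((fun _ : ℝ => (1:ℝ)) t) ∂ν := by
      simp
    rw [h1, bridge (fun _ => 1) (fun t _ => zero_le_one) hint1 hS1, hT1, ENNReal.ofReal_one]
  have hg : AEStronglyMeasurable (fun t : ℝ => t - x) ν :=
    (continuous_id.sub continuous_const).aestronglyMeasurable
  have key := eLpNorm'_le_eLpNorm'_of_exponent_le hα0 (hα1.trans one_le_two) ν hg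
  rw [eLpNorm', eLpNorm'] at key
  have hLα : ∫⁻ t, ‖t - x‖ₑ ^ α ∂ν
      = ENNReal.ofReal (∑' k, W k * Jop c σ (fun s => |s - x| ^ α) k) := by
    rw [← bridge (fun s => |s - x| ^ α)
      (fun t _ => Real.rpow_nonneg (abs_nonneg _) α) hintα hSα]
    refine lintegral_congr (fun t => ?_)
    rw [Real.enorm_eq_ofReal_abs, ENNReal.ofReal_rpow_of_nonneg (abs_nonneg _) hα0.le]
  have hL2 : ∫⁻ t, ‖t - x‖ₑ ^ (2:ℝ) ∂ν
      = ENNReal.ofReal (∑' k, W k * Jop c σ (fun s => (s - x) ^ 2) k) := by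
    rw [← bridge (fun s => (s - x) ^ 2) (fun t _ => sq_nonneg _) hint2 hS2]
    refine lintegral_congr (fun t => ?_)
    rw [Real.enorm_eq_ofReal_abs, ENNReal.ofReal_rpow_of_nonneg (abs_nonneg _) (by norm_num)]
    congr 1
    rw [show ((2:ℝ) = ((2:ℕ):ℝ)) by norm_num, Real.rpow_natCast, sq_abs]
  rw [hLα, hL2] at key
  -- raise both sides to power α
  have key2 := ENNReal.rpow_le_rpow key hα0.le
  rw [← ENNReal.rpow_mul, ← ENNReal.rpow_mul, one_div_mul_cancel hα0.ne', ENNReal.rpow_one,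
    one_div] at key2
  have hexp : (2:ℝ)⁻¹ * α = α / 2 := by ring
  rw [hexp] at key2
  have hS2nn : 0 ≤ ∑' k, W k * Jop c σ (fun s => (s - x) ^ 2) k :=
    tsum_nonneg (fun k => mul_nonneg (hW0 k) (Jop_nonneg hc hσ (fun t _ => sq_nonneg _) k))
  rw [ENNReal.ofReal_rpow_of_nonneg hS2nn (by positivity)] at key2
  exact (ENNReal.ofReal_le_ofReal_iff (Real.rpow_nonneg hS2nn _)).mp key2
end hold


lemma Jcompare {c σ : ℝ} {ψ χ : ℝ → ℝ}
    (hψ : IntegrableOn (fun t : ℝ => Real.exp (-c*t) * t ^ σ * ψ t) (Set.Ioi 0))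
    (hχ : IntegrableOn (fun t : ℝ => Real.exp (-c*t) * t ^ σ * χ t) (Set.Ioi 0))
    (hb : ∀ t ∈ Set.Ioi (0:ℝ), |ψ t| ≤ χ t) :
    |∫ t in Set.Ioi (0:ℝ), Real.exp (-c*t) * t ^ σ * ψ t|
      ≤ ∫ t in Set.Ioi (0:ℝ), Real.exp (-c*t) * t ^ σ * χ t := by
  have h1 : |∫ t in Set.Ioi (0:ℝ), Real.exp (-c * t) * t ^ σ * ψ t|
      ≤ ∫ t in Set.Ioi (0:ℝ), |Real.exp (-c * t) * t ^ σ * ψ t| := by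
    have := norm_integral_le_integral_norm (μ := volume.restrict (Set.Ioi 0))
        (f := fun t : ℝ => Real.exp (-c * t) * t ^ σ * ψ t)
    simpa only [Real.norm_eq_abs] using this
  refine h1.trans (setIntegral_mono_on hψ.abs hχ measurableSet_Ioi (fun t ht => ?_))
  have ht0 : (0:ℝ) < t := ht
  have hker : (0:ℝ) ≤ Real.exp (-c * t) * t ^ σ := by positivity
  rw [abs_mul, abs_of_nonneg hker]
  exact mul_le_mul_of_nonneg_left (hb t ht) hker

section core2
variable {c : ℝ} {σ : ℕ → ℝ}

lemma core (hc : 1 ≤ c) (hσ : ∀ k, 0 ≤ σ k)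
    (W : ℕ → ℝ) (hW0 : ∀ k, 0 ≤ W k) (hWs : Summable W) (hW1 : ∑' k, W k = 1)
    (hWmom : Summable (fun k => W k * (σ k + 3) ^ 2))
    (f : ℝ → ℝ) (M α x : ℝ) (hM : 0 < M) (hα0 : 0 < α) (hα1 : α ≤ 1)
    (hf : ∀ s t : ℝ, 0 ≤ s → 0 ≤ t → |f s - f t| ≤ M * |s - t| ^ α) (hx : 0 ≤ x) :
    |(∑' k, W k * Jop c σ f k) - f x|
      ≤ M * (∑' k, W k * Jop c σ (fun t => (t - x) ^ 2) k) ^ (α / 2) := by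
  have hc0 : (0:ℝ) < c := by linarith
  have hfm : AEStronglyMeasurable f (volume.restrict (Set.Ioi 0)) :=
    ((holder_continuousOn hα0 hf).mono Set.Ioi_subset_Ici_self).aestronglyMeasurable
      measurableSet_Ioi
  -- the test functions
  set φd : ℝ → ℝ := fun t => f t - f x with hφd_def
  set φα : ℝ → ℝ := fun t => |t - x| ^ α with hφα_def
  set φ2 : ℝ → ℝ := fun t => (t - x) ^ 2 with hφ2_def
  have hφαm : AEStronglyMeasurable φα (volume.restrict (Set.Ioi 0)) :=
    (((continuous_id.sub continuous_const).abs).rpow_const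
      (fun t => Or.inr hα0.le)).aestronglyMeasurable
  have hφ2m : AEStronglyMeasurable φ2 (volume.restrict (Set.Ioi 0)) :=
    (((continuous_id.sub continuous_const)).pow 2).aestronglyMeasurable
  have hφdm : AEStronglyMeasurable φd (volume.restrict (Set.Ioi 0)) :=
    hfm.sub aestronglyMeasurable_const
  have h1m : AEStronglyMeasurable (fun _ : ℝ => (1:ℝ)) (volume.restrict (Set.Ioi 0)) :=
    aestronglyMeasurable_const
  -- pointwise bounds by (1+t)^2
  have hbα : ∀ t ∈ Set.Ioi (0:ℝ), |φα t| ≤ (1 + x) * (1 + t) ^ 2 := by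
    intro t ht
    have ht0 : (0:ℝ) < t := ht
    have h1 : |φα t| = |t - x| ^ α := abs_of_nonneg (Real.rpow_nonneg (abs_nonneg _) α)
    have h2 : |t - x| ^ α ≤ 1 + |t - x| := rpow_le_one_add (abs_nonneg _) hα0 hα1
    have h4 : |t - x| ≤ t + x := by
      rw [abs_sub_le_iff]; constructor <;> linarith
    rw [h1]
    have h5 : 1 + (t + x) ≤ (1 + x) * (1 + t) ^ 2 := by
      nlinarith [mul_nonneg hx ht0.le, mul_nonneg (mul_nonneg hx ht0.le) ht0.le, sq_nonneg t]
    linarith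
  have hb2 : ∀ t ∈ Set.Ioi (0:ℝ), |φ2 t| ≤ (1 + x) ^ 2 * (1 + t) ^ 2 := by
    intro t ht
    have ht0 : (0:ℝ) < t := ht
    have h1 : |φ2 t| = (t - x) ^ 2 := abs_of_nonneg (sq_nonneg _)
    rw [h1]
    have key : (1+x)^2*(1+t)^2 - (t-x)^2 = (1+2*x+x*t)*(1+2*t+x*t) := by ring
    have f1 : (0:ℝ) ≤ 1+2*x+x*t := by nlinarith [mul_nonneg hx ht0.le]
    have f2 : (0:ℝ) ≤ 1+2*t+x*t := by nlinarith [mul_nonneg hx ht0.le]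
    nlinarith [mul_nonneg f1 f2]
  have hbd : ∀ t ∈ Set.Ioi (0:ℝ), |φd t| ≤ (M * (1 + x)) * (1 + t) ^ 2 := by
    intro t ht
    have ht0 : (0:ℝ) < t := ht
    have h2 := hf t x ht0.le hx
    have h6 := hbα t ht
    have h1 : |φα t| = |t - x| ^ α := abs_of_nonneg (Real.rpow_nonneg (abs_nonneg _) α)
    rw [h1] at h6
    have h5 : M * |t - x| ^ α ≤ M * ((1 + x) * (1 + t) ^ 2) :=
      mul_le_mul_of_nonneg_left h6 hM.le
    calc |φd t| ≤ M * |t - x| ^ α := h2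
      _ ≤ M * ((1 + x) * (1 + t) ^ 2) := h5
      _ = (M * (1 + x)) * (1 + t) ^ 2 := by ring
  have hbf : ∀ t ∈ Set.Ioi (0:ℝ), |f t| ≤ (|f x| + M * (1 + x)) * (1 + t) ^ 2 := by
    intro t ht
    have ht0 : (0:ℝ) < t := ht
    have h1 := hbd t ht
    have h2 : |f t| ≤ |φd t| + |f x| := by
      have : f t = φd t + f x := by simp [hφd_def]
      rw [this]; exact abs_add_le _ _
    have h3 : (1:ℝ) ≤ (1 + t) ^ 2 := by nlinarith
    nlinarith [abs_nonneg (f x)]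
  have hb1 : ∀ t ∈ Set.Ioi (0:ℝ), |(1:ℝ)| ≤ 1 * (1 + t) ^ 2 := by
    intro t ht
    have ht0 : (0:ℝ) < t := ht
    rw [abs_one]; nlinarith
  -- integrabilities
  have hint1 : ∀ k, IntegrableOn
      (fun t : ℝ => Real.exp (-c*t) * t ^ (σ k) * (fun _ : ℝ => (1:ℝ)) t) (Set.Ioi 0) :=
    fun k => integrableOn_kernel_mul hc0 (hσ k) h1m hb1
  have hintα : ∀ k, IntegrableOn
      (fun t : ℝ => Real.exp (-c*t) * t ^ (σ k) * φα t) (Set.Ioi 0) :=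
    fun k => integrableOn_kernel_mul hc0 (hσ k) hφαm hbα
  have hint2 : ∀ k, IntegrableOn
      (fun t : ℝ => Real.exp (-c*t) * t ^ (σ k) * φ2 t) (Set.Ioi 0) :=
    fun k => integrableOn_kernel_mul hc0 (hσ k) hφ2m hb2
  have hintd : ∀ k, IntegrableOn
      (fun t : ℝ => Real.exp (-c*t) * t ^ (σ k) * φd t) (Set.Ioi 0) :=
    fun k => integrableOn_kernel_mul hc0 (hσ k) hφdm hbd
  have hintf : ∀ k, IntegrableOn
      (fun t : ℝ => Real.exp (-c*t) * t ^ (σ k) * f t) (Set.Ioi 0) :=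
    fun k => integrableOn_kernel_mul hc0 (hσ k) hfm hbf
  -- J of constants
  have hJ1 : ∀ k, Jop c σ (fun _ => (1:ℝ)) k = 1 := by
    intro k
    rw [Jop]
    have e : ∫ t in Set.Ioi (0:ℝ), Real.exp (-c*t) * t ^ (σ k) * (fun _ : ℝ => (1:ℝ)) t
        = ∫ t in Set.Ioi (0:ℝ), Real.exp (-c*t) * t ^ (σ k) := by
      refine setIntegral_congr_fun measurableSet_Ioi (fun t _ => ?_)
      simp
    rw [e]
    exact kernel_norm_one hc0 (hσ k)
  have hJconst : ∀ (r : ℝ) (k), Jop c σ (fun _ => r) k = r := by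
    intro r k
    rw [Jop]
    have e : ∫ t in Set.Ioi (0:ℝ), Real.exp (-c*t) * t ^ (σ k) * (fun _ : ℝ => r) t
        = ∫ t in Set.Ioi (0:ℝ), r * (Real.exp (-c*t) * t ^ (σ k)) := by
      refine setIntegral_congr_fun measurableSet_Ioi (fun t _ => ?_)
      simp [mul_comm]
    rw [e, MeasureTheory.integral_const_mul,
      show (c ^ (σ k + 1) / Real.Gamma (σ k + 1)) *
        (r * ∫ t in Set.Ioi (0:ℝ), Real.exp (-c*t) * t ^ (σ k))
        = r * ((c ^ (σ k + 1) / Real.Gamma (σ k + 1)) *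
          ∫ t in Set.Ioi (0:ℝ), Real.exp (-c*t) * t ^ (σ k)) by ring,
      kernel_norm_one hc0 (hσ k), mul_one]
  -- moment facts
  have hck0 : ∀ k, 0 ≤ c ^ (σ k + 1) / Real.Gamma (σ k + 1) := by
    intro k
    have := Real.Gamma_pos_of_pos (show (0:ℝ) < σ k + 1 by have := hσ k; linarith)
    positivity
  have hJP_le : ∀ k, Jop c σ (fun t => (1 + t) ^ 2) k ≤ (σ k + 3) ^ 2 :=
    fun k => kernel_moment_bound hc (hσ k)
  have hJPnn : ∀ k, 0 ≤ Jop c σ (fun t => (1 + t) ^ 2) k :=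
    Jop_nonneg hc0 hσ (fun t ht => sq_nonneg _)
  have hSP : Summable (fun k => W k * Jop c σ (fun t => (1 + t) ^ 2) k) := by
    refine Summable.of_nonneg_of_le (fun k => mul_nonneg (hW0 k) (hJPnn k)) (fun k => ?_) hWmom
    exact mul_le_mul_of_nonneg_left (hJP_le k) (hW0 k)
  -- generic |Jop ψ k| ≤ C * Jop P k and summability
  have habs_term : ∀ (ψ : ℝ → ℝ) (C : ℝ),
      AEStronglyMeasurable ψ (volume.restrict (Set.Ioi 0)) →
      (∀ t ∈ Set.Ioi (0:ℝ), |ψ t| ≤ C * (1 + t) ^ 2) →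
      ∀ k, |Jop c σ ψ k| ≤ C * Jop c σ (fun t => (1 + t) ^ 2) k := by
    intro ψ C hm hb k
    rw [Jop, Jop, abs_mul, abs_of_nonneg (hck0 k)]
    have h1 := Jabs hc0 (hσ k) hm hb
    calc (c ^ (σ k + 1) / Real.Gamma (σ k + 1)) *
          |∫ t in Set.Ioi (0:ℝ), Real.exp (-c*t) * t ^ (σ k) * ψ t|
        ≤ (c ^ (σ k + 1) / Real.Gamma (σ k + 1)) *
          (C * ∫ t in Set.Ioi (0:ℝ), Real.exp (-c*t) * t ^ (σ k) * (1 + t) ^ 2) :=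
          mul_le_mul_of_nonneg_left h1 (hck0 k)
      _ = C * ((c ^ (σ k + 1) / Real.Gamma (σ k + 1)) *
          ∫ t in Set.Ioi (0:ℝ), Real.exp (-c*t) * t ^ (σ k) * (1 + t) ^ 2) := by ring
  have mk_summ : ∀ (ψ : ℝ → ℝ) (C : ℝ),
      AEStronglyMeasurable ψ (volume.restrict (Set.Ioi 0)) →
      (∀ t ∈ Set.Ioi (0:ℝ), |ψ t| ≤ C * (1 + t) ^ 2) →
      Summable (fun k => W k * Jop c σ ψ k) := by
    intro ψ C hm hb
    refine Summable.of_norm_bounded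
      (hSP.mul_left C) (fun k => ?_)
    rw [Real.norm_eq_abs, abs_mul, abs_of_nonneg (hW0 k)]
    calc W k * |Jop c σ ψ k| ≤ W k * (C * Jop c σ (fun t => (1 + t) ^ 2) k) :=
        mul_le_mul_of_nonneg_left (habs_term ψ C hm hb k) (hW0 k)
      _ = C * (W k * Jop c σ (fun t => (1 + t) ^ 2) k) := by ring
  have hSα : Summable (fun k => W k * Jop c σ φα k) := mk_summ φα _ hφαm hbα
  have hS2 : Summable (fun k => W k * Jop c σ φ2 k) := mk_summ φ2 _ hφ2m hb2
  have hSd : Summable (fun k => W k * Jop c σ φd k) := mk_summ φd _ hφdm hbd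
  -- split J f = J φd + f x
  have hsplit : ∀ k, Jop c σ f k = Jop c σ φd k + f x := by
    intro k
    have e : ∫ t in Set.Ioi (0:ℝ), Real.exp (-c*t) * t ^ (σ k) * f t
        = ∫ t in Set.Ioi (0:ℝ), (Real.exp (-c*t) * t ^ (σ k) * φd t
          + Real.exp (-c*t) * t ^ (σ k) * (fun _ : ℝ => f x) t) := by
      refine setIntegral_congr_fun measurableSet_Ioi (fun t _ => ?_)
      simp only [hφd_def]
      ring
    have hc' : IntegrableOn
        (fun t : ℝ => Real.exp (-c*t) * t ^ (σ k) * (fun _ : ℝ => f x) t) (Set.Ioi 0) := by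
      refine integrableOn_kernel_mul (C := |f x|) hc0 (hσ k) aestronglyMeasurable_const
        (fun t ht => ?_)
      have ht0 : (0:ℝ) < t := ht
      have : (1:ℝ) ≤ (1 + t) ^ 2 := by nlinarith
      calc |(fun _ : ℝ => f x) t| = |f x| := rfl
        _ ≤ |f x| * (1 + t) ^ 2 := by
          nlinarith [abs_nonneg (f x)]
    have e2 := integral_add (hintd k) hc'
    rw [Jop, e, e2, mul_add]
    congr 1
    have := hJconst (f x) k
    rw [Jop] at this
    exact this
  -- the tsum computation
  have hE : ∑' k, W k * Jop c σ f k = (∑' k, W k * Jop c σ φd k) + f x := by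
    have e1 : ∀ k, W k * Jop c σ f k = W k * Jop c σ φd k + f x * W k := by
      intro k; rw [hsplit k]; ring
    rw [tsum_congr e1, Summable.tsum_add hSd (hWs.mul_left (f x)), tsum_mul_left, hW1, mul_one]
  rw [hE, add_sub_cancel_right]
  -- bound by M * Sα
  have hterm : ∀ k, ‖W k * Jop c σ φd k‖ ≤ W k * (M * Jop c σ φα k) := by
    intro k
    rw [Real.norm_eq_abs, abs_mul, abs_of_nonneg (hW0 k)]
    refine mul_le_mul_of_nonneg_left ?_ (hW0 k)
    -- |Jop φd k| ≤ M * Jop φα k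
    rw [Jop, Jop, abs_mul, abs_of_nonneg (hck0 k)]
    have hχ : IntegrableOn
        (fun t : ℝ => Real.exp (-c*t) * t ^ (σ k) * (M * φα t)) (Set.Ioi 0) := by
      have hI : IntegrableOn (fun t : ℝ => M * (Real.exp (-c*t) * t ^ (σ k) * φα t))
          (Set.Ioi 0) := (hintα k).const_mul M
      refine hI.congr_fun (fun t _ => ?_) measurableSet_Ioi
      ring
    have h1 : |∫ t in Set.Ioi (0:ℝ), Real.exp (-c*t) * t ^ (σ k) * φd t|
        ≤ ∫ t in Set.Ioi (0:ℝ), Real.exp (-c*t) * t ^ (σ k) * (M * φα t) := by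
      refine Jcompare (hintd k) hχ (fun t ht => ?_)
      have ht0 : (0:ℝ) < t := ht
      exact hf t x ht0.le hx
    have h2 : ∫ t in Set.Ioi (0:ℝ), Real.exp (-c*t) * t ^ (σ k) * (M * φα t)
        = M * ∫ t in Set.Ioi (0:ℝ), Real.exp (-c*t) * t ^ (σ k) * φα t := by
      rw [← MeasureTheory.integral_const_mul]
      refine setIntegral_congr_fun measurableSet_Ioi (fun t _ => ?_)
      ring
    calc (c ^ (σ k + 1) / Real.Gamma (σ k + 1)) *
          |∫ t in Set.Ioi (0:ℝ), Real.exp (-c*t) * t ^ (σ k) * φd t|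
        ≤ (c ^ (σ k + 1) / Real.Gamma (σ k + 1)) *
          (M * ∫ t in Set.Ioi (0:ℝ), Real.exp (-c*t) * t ^ (σ k) * φα t) := by
          refine mul_le_mul_of_nonneg_left ?_ (hck0 k)
          rw [← h2]; exact h1
      _ = M * ((c ^ (σ k + 1) / Real.Gamma (σ k + 1)) *
          ∫ t in Set.Ioi (0:ℝ), Real.exp (-c*t) * t ^ (σ k) * φα t) := by ring
  have hRS : Summable (fun k => W k * (M * Jop c σ φα k)) := by
    refine (hSα.mul_left M).congr (fun k => ?_)
    ring
  have habs : |∑' k, W k * Jop c σ φd k| ≤ ∑' k, W k * (M * Jop c σ φα k) := by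
    have h1 := norm_tsum_le_tsum_norm (f := fun k => W k * Jop c σ φd k) (hSd.abs.congr
      (fun k => (Real.norm_eq_abs _).symm))
    rw [Real.norm_eq_abs] at h1
    refine h1.trans (Summable.tsum_le_tsum hterm (hSd.abs.congr
      (fun k => (Real.norm_eq_abs _).symm)) hRS)
  have hMS : ∑' k, W k * (M * Jop c σ φα k) = M * ∑' k, W k * Jop c σ φα k := by
    rw [← tsum_mul_left]
    exact tsum_congr (fun k => by ring)
  have hHolder : ∑' k, W k * Jop c σ φα k
      ≤ (∑' k, W k * Jop c σ φ2 k) ^ (α / 2) :=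
    holder_core hc0 hσ W hW0 hWs hW1 hJ1 x α hα0 hα1 hint1 hintα hint2 hSα hS2
  calc |∑' k, W k * Jop c σ φd k| ≤ ∑' k, W k * (M * Jop c σ φα k) := habs
    _ = M * ∑' k, W k * Jop c σ φα k := hMS
    _ ≤ M * (∑' k, W k * Jop c σ φ2 k) ^ (α / 2) :=
        mul_le_mul_of_nonneg_left hHolder hM.le
end core2


lemma cauchy_prod {u v : ℕ → ℝ} (hu0 : ∀ j, 0 ≤ u j) (hv0 : ∀ m, 0 ≤ v m)
    (hu : Summable u) (hv : Summable v) :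
    Summable (fun k => ∑ j ∈ Finset.range (k+1), u j * v (k-j)) ∧
    ∑' k, ∑ j ∈ Finset.range (k+1), u j * v (k-j) = (∑' j, u j) * (∑' m, v m) := by
  have hu' : Summable (fun j => ‖u j‖) := hu.congr (fun j => (Real.norm_of_nonneg (hu0 j)).symm)
  have hv' : Summable (fun m => ‖v m‖) := hv.congr (fun m => (Real.norm_of_nonneg (hv0 m)).symm)
  exact ⟨(summable_norm_sum_mul_range_of_summable_norm hu' hv').of_norm,
    (tsum_mul_tsum_eq_tsum_sum_range_of_summable_norm hu' hv').symm⟩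

lemma summable_weight {w : ℕ → ℝ} {t0 : ℝ} (ht0 : 1 < t0) (hw0 : ∀ k, 0 ≤ w k)
    (hs : Summable (fun k => w k * t0 ^ k)) (c0 : ℝ) (hc0 : 0 ≤ c0) :
    Summable (fun k => w k * ((k:ℝ) + c0) ^ 2) := by
  have ht0p : (0:ℝ) < t0 := by linarith
  set T := ∑' k, w k * t0 ^ k with hT_def
  have hTk : ∀ k, w k ≤ T * (1/t0) ^ k := by
    intro k
    have h1 : w k * t0 ^ k ≤ T :=
      Summable.le_tsum hs k (fun j _ => mul_nonneg (hw0 j) (by positivity))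
    have h2 : (0:ℝ) < t0 ^ k := by positivity
    rw [one_div, inv_pow, ← div_eq_mul_inv, le_div_iff₀ h2]
    exact h1
  have hr : ‖1/t0‖ < 1 := by
    rw [Real.norm_eq_abs, abs_of_pos (by positivity), div_lt_one ht0p]
    exact ht0
  have h2 := summable_pow_mul_geometric_of_norm_lt_one (R := ℝ) 2 hr
  have h1' := summable_pow_mul_geometric_of_norm_lt_one (R := ℝ) 1 hr
  have h0' := summable_pow_mul_geometric_of_norm_lt_one (R := ℝ) 0 hr
  have hmaj : Summable (fun k : ℕ => T * (((k:ℝ) + c0) ^ 2 * (1/t0) ^ k)) := by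
    apply Summable.mul_left
    have := (h2.add (h1'.mul_left (2*c0))).add (h0'.mul_left (c0^2))
    refine this.congr (fun k => ?_)
    simp only [Pi.add_apply, pow_zero, pow_one]
    ring
  refine Summable.of_nonneg_of_le (fun k => mul_nonneg (hw0 k) (sq_nonneg _))
    (fun k => ?_) hmaj
  calc w k * ((k:ℝ) + c0) ^ 2 ≤ (T * (1/t0) ^ k) * ((k:ℝ) + c0) ^ 2 :=
      mul_le_mul_of_nonneg_right (hTk k) (sq_nonneg _)
    _ = T * (((k:ℝ) + c0) ^ 2 * (1/t0) ^ k) := by ring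

noncomputable def wSeq (μ : ℝ) (a : ℕ → ℝ) (y : ℝ) (k : ℕ) : ℝ :=
  ∑ j ∈ Finset.range (k+1),
    (y ^ j / gamRec μ j) * (a (k-j) / (Afun μ a 1 * gamRec μ (k-j)))

lemma pk_div_eq {μ : ℝ} (hμ : 0 ≤ μ) {a : ℕ → ℝ} (hA1 : Afun μ a 1 ≠ 0) (y : ℝ) (k : ℕ) :
    pk μ a k y / gamRec μ k = Afun μ a 1 * wSeq μ a y k := by
  rw [pk, wSeq, Finset.sum_div, Finset.mul_sum]
  refine Finset.sum_congr rfl (fun j _ => ?_)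
  have h1 := (gamRec_pos hμ k).ne'
  have h2 := (gamRec_pos hμ j).ne'
  have h3 := (gamRec_pos hμ (k - j)).ne'
  field_simp

lemma Dop_eq_tsum (μ lam : ℝ) (hμ : 0 ≤ μ) (hlam : 0 ≤ lam) (a : ℕ → ℝ) (hA1 : Afun μ a 1 ≠ 0)
    (n : ℕ) (x : ℝ) (he : emu μ ((n:ℝ) * x) ≠ 0) (φ : ℝ → ℝ) :
    Dop μ lam a n φ x = ∑' k, (wSeq μ a ((n:ℝ)*x) k / emu μ ((n:ℝ)*x)) *
      Jop (n:ℝ) (fun k => (k:ℝ) + 2*μ*theta k + lam) φ k := by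
  rw [Dop, ← tsum_mul_left]
  refine tsum_congr (fun k => ?_)
  rw [Jop, pk_div_eq hμ hA1 ((n:ℝ)*x) k]
  beta_reduce
  have hθ := theta_nonneg k
  have hG : Real.Gamma ((k:ℝ) + 2*μ*theta k + lam + 1) ≠ 0 := by
    refine (Real.Gamma_pos_of_pos ?_).ne'
    positivity
  field_simp [hG]

theorem Dop_lipschitz_estimate (μ lam : ℝ) (hμ : 0 ≤ μ) (hlam : 0 ≤ lam)
    (a : ℕ → ℝ) (ha0 : a 0 ≠ 0) (hA : AnalyticHyp μ a) (hA1 : Afun μ a 1 ≠ 0)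
    (hpos : ∀ r : ℕ, 0 ≤ a r / Afun μ a 1)
    (f : ℝ → ℝ) (M α : ℝ) (hM : 0 < M) (hα0 : 0 < α) (hα1 : α ≤ 1)
    (hf : ∀ x y : ℝ, 0 ≤ x → 0 ≤ y → |f x - f y| ≤ M * |x - y| ^ α)
    (n : ℕ) (hn : 1 ≤ n) (x : ℝ) (hx : 0 ≤ x) :
    |Dop μ lam a n f x - f x| ≤
      M * (Dop μ lam a n (fun t => (t - x) ^ 2) x) ^ (α / 2) := by
  obtain ⟨R, hR1, hRsum⟩ := hA
  have hy : (0:ℝ) ≤ (n:ℝ) * x := by positivity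
  set u : ℕ → ℝ := fun j => ((n:ℝ)*x) ^ j / gamRec μ j with hu_def
  set v : ℕ → ℝ := fun m => a m / (Afun μ a 1 * gamRec μ m) with hv_def
  have hu0 : ∀ j, 0 ≤ u j := fun j => by
    have := gamRec_pos hμ j
    simp only [hu_def]
    positivity
  have hv0 : ∀ m, 0 ≤ v m := by
    intro m
    have h1 : v m = (a m / Afun μ a 1) / gamRec μ m := by
      simp only [hv_def]
      rw [div_div]
    rw [h1]
    exact div_nonneg (hpos m) (gamRec_pos hμ m).le
  have hu : Summable u := summable_pow_div_gamRec hμ hy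
  have hv : Summable v := by
    have h := (hRsum 1 (by rw [abs_one]; exact hR1)).div_const (Afun μ a 1)
    refine h.congr (fun m => ?_)
    simp only [hv_def]
    rw [one_pow, mul_one, div_div, mul_comm (gamRec μ m) (Afun μ a 1)]
  have htsum_v : ∑' m, v m = 1 := by
    have h2 : ∑' m, v m = (∑' m, a m * 1 ^ m / gamRec μ m) / Afun μ a 1 := by
      rw [← tsum_div_const]
      exact tsum_congr (fun m => by
        simp only [hv_def]
        rw [one_pow, mul_one, div_div, mul_comm (gamRec μ m) (Afun μ a 1)])
    have h3 : Afun μ a 1 = ∑' m, a m * 1 ^ m / gamRec μ m := rfl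
    rw [h2, ← h3, div_self hA1]
  have he1 : (1:ℝ) ≤ emu μ ((n:ℝ)*x) := by
    have h1 : u 0 ≤ ∑' j, u j := Summable.le_tsum hu 0 (fun j _ => hu0 j)
    have h2 : u 0 = 1 := by simp [hu_def, gamRec]
    have h3 : emu μ ((n:ℝ)*x) = ∑' j, u j := rfl
    rw [h3, ← h2]
    exact h1
  have hepos : (0:ℝ) < emu μ ((n:ℝ)*x) := by linarith
  have he : emu μ ((n:ℝ)*x) ≠ 0 := hepos.ne'
  have hw_eq : ∀ k, wSeq μ a ((n:ℝ)*x) k = ∑ j ∈ Finset.range (k+1), u j * v (k-j) :=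
    fun k => rfl
  obtain ⟨hws, hwt⟩ := cauchy_prod hu0 hv0 hu hv
  have hw0 : ∀ k, 0 ≤ wSeq μ a ((n:ℝ)*x) k := by
    intro k
    rw [hw_eq k]
    exact Finset.sum_nonneg (fun j _ => mul_nonneg (hu0 j) (hv0 _))
  set W : ℕ → ℝ := fun k => wSeq μ a ((n:ℝ)*x) k / emu μ ((n:ℝ)*x) with hW_def
  have hW0 : ∀ k, 0 ≤ W k := fun k => div_nonneg (hw0 k) hepos.le
  have hws' : Summable (fun k => wSeq μ a ((n:ℝ)*x) k) := hws.congr (fun k => (hw_eq k).symm)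
  have hWs : Summable W := hws'.div_const _
  have hW1 : ∑' k, W k = 1 := by
    simp only [hW_def]
    rw [tsum_div_const]
    have : ∑' k, wSeq μ a ((n:ℝ)*x) k = emu μ ((n:ℝ)*x) := by
      rw [tsum_congr hw_eq, hwt, htsum_v, mul_one]
      rfl
    rw [this, div_self he]
  -- moment summability
  set t0 : ℝ := (1 + R)/2 with ht0_def
  have ht0a : 1 < t0 := by rw [ht0_def]; linarith
  have ht0R : t0 < R := by rw [ht0_def]; linarith
  have ht0p : (0:ℝ) < t0 := by linarith
  have hu' : Summable (fun j => u j * t0 ^ j) := by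
    refine (summable_pow_div_gamRec hμ (mul_nonneg hy ht0p.le)).congr (fun j => ?_)
    simp only [hu_def]
    rw [mul_pow, div_mul_eq_mul_div]
  have hv' : Summable (fun m => v m * t0 ^ m) := by
    have h := (hRsum t0 (by rw [abs_of_pos ht0p]; exact ht0R)).div_const (Afun μ a 1)
    refine h.congr (fun m => ?_)
    simp only [hv_def]
    rw [div_div, mul_comm (gamRec μ m) (Afun μ a 1), div_mul_eq_mul_div]
  have hu0' : ∀ j, 0 ≤ u j * t0 ^ j := fun j => mul_nonneg (hu0 j) (by positivity)
  have hv0' : ∀ m, 0 ≤ v m * t0 ^ m := fun m => mul_nonneg (hv0 m) (by positivity)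
  have hwt0 : Summable (fun k => wSeq μ a ((n:ℝ)*x) k * t0 ^ k) := by
    refine ((cauchy_prod hu0' hv0' hu' hv').1).congr (fun k => ?_)
    rw [hw_eq k, Finset.sum_mul]
    refine Finset.sum_congr rfl (fun j hj => ?_)
    have hjk : j ≤ k := Nat.lt_succ_iff.mp (Finset.mem_range.mp hj)
    have hpow : t0 ^ j * t0 ^ (k - j) = t0 ^ k := by
      rw [← pow_add, Nat.add_sub_cancel' hjk]
    calc u j * t0 ^ j * (v (k-j) * t0 ^ (k-j))
        = u j * v (k-j) * (t0 ^ j * t0 ^ (k-j)) := by ring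
      _ = u j * v (k-j) * t0 ^ k := by rw [hpow]
  have hmom' := summable_weight ht0a hw0 hwt0 (2*μ + lam + 3) (by positivity)
  have hWmom : Summable (fun k => W k * (((k:ℝ) + 2*μ*theta k + lam) + 3) ^ 2) := by
    refine Summable.of_nonneg_of_le (fun k => ?_) (fun k => ?_) (hmom'.div_const
      (emu μ ((n:ℝ)*x)))
    · refine mul_nonneg (hW0 k) (sq_nonneg _)
    · have hθ0 := theta_nonneg k
      have hθ1 := theta_le_one k
      have hb : ((k:ℝ) + 2*μ*theta k + lam) + 3 ≤ (k:ℝ) + (2*μ + lam + 3) := by nlinarith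
      have hbn : (0:ℝ) ≤ ((k:ℝ) + 2*μ*theta k + lam) + 3 := by positivity
      have hsq : (((k:ℝ) + 2*μ*theta k + lam) + 3) ^ 2 ≤ ((k:ℝ) + (2*μ + lam + 3)) ^ 2 :=
        pow_le_pow_left₀ hbn hb 2
      have h1 : W k * (((k:ℝ) + 2*μ*theta k + lam) + 3) ^ 2
          = (wSeq μ a ((n:ℝ)*x) k * (((k:ℝ) + 2*μ*theta k + lam) + 3) ^ 2)
            / emu μ ((n:ℝ)*x) := by
        simp only [hW_def]; ring
      rw [h1, div_le_div_iff_of_pos_right hepos]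
      exact mul_le_mul_of_nonneg_left hsq (hw0 k)
  have hc : (1:ℝ) ≤ (n:ℝ) := by exact_mod_cast hn
  have hσ : ∀ k : ℕ, 0 ≤ (k:ℝ) + 2*μ*theta k + lam := by
    intro k
    have := theta_nonneg k
    positivity
  rw [Dop_eq_tsum μ lam hμ hlam a hA1 n x he f,
    Dop_eq_tsum μ lam hμ hlam a hA1 n x he (fun t => (t - x) ^ 2)]
  exact core hc hσ W hW0 hWs hW1 hWmom f M α x hM hα0 hα1 hf hx
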